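/- Let λ ∈ ℝ, c ≥ 0, C_λ = max{1, e^{λT}}, and let ψ₁, ψ₂ : [0,T] → ℝ be bounded measurable functions. Writing E_i(t) = e^{−c ∫₀ᵗ |ψ_i(ξ)| dξ} and I_i(t) = ∫₀ᵗ e^{λs} E_i(s) ds for i = 1,2, one has for every t ∈ [0,T]: |E₁(t) I₂(t) − E₂(t) I₁(t)| ≤ 2 c C_λ T² · sup_{ξ ∈ [0,T]} |ψ₁(ξ) − ψ₂(ξ)|. -/

import Mathlib

open MeasureTheory Set intervalIntegral

lemma exp_lipschitz_nonpos {a b : ℝ} (ha : a ≤ 0) (hb : b ≤ 0) :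
    |Real.exp a - Real.exp b| ≤ |a - b| := by
  wlog h : b ≤ a generalizing a b
  · rw [abs_sub_comm, abs_sub_comm a b]; exact this hb ha (le_of_not_ge h)
  have h1 : Real.exp b ≤ Real.exp a := Real.exp_le_exp.mpr h
  have h2 : Real.exp a ≤ 1 := Real.exp_le_one_iff.mpr ha
  have h3 : 1 + (b - a) ≤ Real.exp (b - a) := by
    have := Real.add_one_le_exp (b - a); linarith
  have h4 : Real.exp b = Real.exp a * Real.exp (b - a) := by
    rw [← Real.exp_add]; ring_nf
  have hea : 0 < Real.exp a := Real.exp_pos a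
  rw [abs_of_nonneg (by linarith), abs_of_nonneg (by linarith)]
  nlinarith [Real.exp_pos (b - a)]

theorem cross_term_estimate
    (T c lam : ℝ) (hT : 0 < T) (hc : 0 ≤ c)
    (ψ₁ ψ₂ : ℝ → ℝ) (hmeas₁ : Measurable ψ₁) (hmeas₂ : Measurable ψ₂)
    (hbdd₁ : ∃ M : ℝ, ∀ t ∈ Icc (0 : ℝ) T, |ψ₁ t| ≤ M)
    (hbdd₂ : ∃ M : ℝ, ∀ t ∈ Icc (0 : ℝ) T, |ψ₂ t| ≤ M) :
    ∀ t ∈ Icc (0 : ℝ) T,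
      |Real.exp (-c * ∫ ξ in (0:ℝ)..t, |ψ₁ ξ|) *
          (∫ s in (0:ℝ)..t,
            Real.exp (lam * s) * Real.exp (-c * ∫ ξ in (0:ℝ)..s, |ψ₂ ξ|)) -
        Real.exp (-c * ∫ ξ in (0:ℝ)..t, |ψ₂ ξ|) *
          (∫ s in (0:ℝ)..t,
            Real.exp (lam * s) * Real.exp (-c * ∫ ξ in (0:ℝ)..s, |ψ₁ ξ|))| ≤
      2 * c * max 1 (Real.exp (lam * T)) * T ^ 2 *
        ⨆ ξ ∈ Icc (0 : ℝ) T, |ψ₁ ξ - ψ₂ ξ| := by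
  obtain ⟨M₁, hM₁⟩ := hbdd₁
  obtain ⟨M₂, hM₂⟩ := hbdd₂
  set S : ℝ := ⨆ ξ ∈ Icc (0 : ℝ) T, |ψ₁ ξ - ψ₂ ξ| with hSdef
  set C : ℝ := max 1 (Real.exp (lam * T)) with hCdef
  have hC1 : (1 : ℝ) ≤ C := le_max_left _ _
  have hC0 : (0 : ℝ) ≤ C := by linarith
  -- boundedness of the sup family
  have hbdd : BddAbove (Set.range fun ξ => ⨆ _ : ξ ∈ Icc (0 : ℝ) T, |ψ₁ ξ - ψ₂ ξ|) := by
    refine ⟨max 0 (M₁ + M₂), ?_⟩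
    rintro x ⟨ξ, rfl⟩
    dsimp only
    by_cases h : ξ ∈ Icc (0 : ℝ) T
    · rw [ciSup_pos h]
      refine le_trans ?_ (le_max_right _ _)
      have := hM₁ ξ h; have := hM₂ ξ h
      calc |ψ₁ ξ - ψ₂ ξ| ≤ |ψ₁ ξ| + |ψ₂ ξ| := abs_sub _ _
        _ ≤ M₁ + M₂ := by linarith
    · simp only [h, Real.iSup_of_isEmpty]
      exact le_max_left _ _
  have hS : ∀ ξ ∈ Icc (0 : ℝ) T, |ψ₁ ξ - ψ₂ ξ| ≤ S := by
    intro ξ hξ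
    have := le_ciSup hbdd ξ
    rwa [ciSup_pos hξ] at this
  have hS0 : 0 ≤ S :=
    le_trans (abs_nonneg _) (hS 0 ⟨le_refl 0, hT.le⟩)
  -- integrability of |ψᵢ| on [0,T]
  have hint : ∀ (ψ : ℝ → ℝ) (M : ℝ), Measurable ψ → (∀ s ∈ Icc (0:ℝ) T, |ψ s| ≤ M) →
      IntegrableOn (fun ξ => |ψ ξ|) (Icc (0:ℝ) T) volume := by
    intro ψ M hm hb
    refine Measure.integrableOn_of_bounded (M := M) (by simp) hm.abs.aestronglyMeasurable ?_
    filter_upwards [ae_restrict_mem measurableSet_Icc] with x hx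
    simpa [abs_abs] using hb x hx
  have hint₁ := hint ψ₁ M₁ hmeas₁ hM₁
  have hint₂ := hint ψ₂ M₂ hmeas₂ hM₂
  -- interval integrability on subintervals
  have hii : ∀ (ψ : ℝ → ℝ), IntegrableOn (fun ξ => |ψ ξ|) (Icc (0:ℝ) T) volume →
      ∀ s ∈ Icc (0:ℝ) T, IntervalIntegrable (fun ξ => |ψ ξ|) volume 0 s := by
    intro ψ h s hs
    have h2 : IntegrableOn (fun ξ => |ψ ξ|) (uIcc (0:ℝ) s) volume := by
      rw [Set.uIcc_of_le hs.1]
      exact h.mono_set (Icc_subset_Icc le_rfl hs.2)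
    exact h2.intervalIntegrable
  -- primitives are nonnegative
  have hprim_nonneg : ∀ (ψ : ℝ → ℝ), ∀ s ∈ Icc (0:ℝ) T,
      (0:ℝ) ≤ ∫ ξ in (0:ℝ)..s, |ψ ξ| := by
    intro ψ s hs
    exact intervalIntegral.integral_nonneg hs.1 (fun ξ _ => abs_nonneg _)
  -- E functions
  set E₁ : ℝ → ℝ := fun s => Real.exp (-c * ∫ ξ in (0:ℝ)..s, |ψ₁ ξ|) with hE₁def
  set E₂ : ℝ → ℝ := fun s => Real.exp (-c * ∫ ξ in (0:ℝ)..s, |ψ₂ ξ|) with hE₂def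
  have hE_le1 : ∀ s ∈ Icc (0:ℝ) T, E₁ s ≤ 1 ∧ E₂ s ≤ 1 := by
    intro s hs
    constructor <;>
    · apply Real.exp_le_one_iff.mpr
      have := hprim_nonneg ψ₁ s hs; have := hprim_nonneg ψ₂ s hs
      nlinarith
  -- difference of E
  have hEdiff : ∀ s ∈ Icc (0:ℝ) T, |E₁ s - E₂ s| ≤ c * T * S := by
    intro s hs
    have h1 : -c * ∫ ξ in (0:ℝ)..s, |ψ₁ ξ| ≤ 0 := by
      have := hprim_nonneg ψ₁ s hs; nlinarith
    have h2 : -c * ∫ ξ in (0:ℝ)..s, |ψ₂ ξ| ≤ 0 := by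
      have := hprim_nonneg ψ₂ s hs; nlinarith
    calc |E₁ s - E₂ s|
        ≤ |(-c * ∫ ξ in (0:ℝ)..s, |ψ₁ ξ|) - (-c * ∫ ξ in (0:ℝ)..s, |ψ₂ ξ|)| :=
          exp_lipschitz_nonpos h1 h2
      _ = c * abs ((∫ ξ in (0:ℝ)..s, |ψ₁ ξ|) - ∫ ξ in (0:ℝ)..s, |ψ₂ ξ|) := by
          have h3 : (-c * ∫ ξ in (0:ℝ)..s, |ψ₁ ξ|) - (-c * ∫ ξ in (0:ℝ)..s, |ψ₂ ξ|) =
              -(c * ((∫ ξ in (0:ℝ)..s, |ψ₁ ξ|) - ∫ ξ in (0:ℝ)..s, |ψ₂ ξ|)) := by ring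
          rw [h3, abs_neg, abs_mul, abs_of_nonneg hc]
      _ ≤ c * (S * T) := by
          gcongr
          rw [← intervalIntegral.integral_sub (hii ψ₁ hint₁ s hs) (hii ψ₂ hint₂ s hs)]
          have hb : ∀ ξ ∈ Set.uIoc (0:ℝ) s, ‖|ψ₁ ξ| - |ψ₂ ξ|‖ ≤ S := by
            intro ξ hξ
            rw [Set.uIoc_of_le hs.1] at hξ
            have hmem : ξ ∈ Icc (0:ℝ) T := ⟨hξ.1.le, hξ.2.trans hs.2⟩
            calc ‖|ψ₁ ξ| - |ψ₂ ξ|‖ ≤ |ψ₁ ξ - ψ₂ ξ| := abs_abs_sub_abs_le_abs_sub _ _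
              _ ≤ S := hS ξ hmem
          calc abs (∫ ξ in (0:ℝ)..s, (|ψ₁ ξ| - |ψ₂ ξ|)) ≤ S * |s - 0| :=
                intervalIntegral.norm_integral_le_of_norm_le_const hb
            _ ≤ S * T := by
                rw [sub_zero, abs_of_nonneg hs.1]; exact mul_le_mul_of_nonneg_left hs.2 hS0
      _ = c * T * S := by ring
  -- exp(lam s) bound
  have hexpb : ∀ s ∈ Icc (0:ℝ) T, Real.exp (lam * s) ≤ C := by
    intro s hs
    rcases le_or_gt 0 lam with h | h
    · exact le_trans (Real.exp_le_exp.mpr (by nlinarith [hs.2])) (le_max_right _ _)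
    · exact le_trans (Real.exp_le_one_iff.mpr (by nlinarith [hs.1])) (le_max_left _ _)
  -- now fix t
  intro t ht
  -- continuity / integrability of the integrands
  have hcontE : ∀ (ψ : ℝ → ℝ), IntegrableOn (fun ξ => |ψ ξ|) (Icc (0:ℝ) T) volume →
      IntervalIntegrable
        (fun s => Real.exp (lam * s) * Real.exp (-c * ∫ ξ in (0:ℝ)..s, |ψ ξ|))
        volume 0 t := by
    intro ψ h
    have h1 : ContinuousOn (fun s => ∫ ξ in (0:ℝ)..s, |ψ ξ|) (Icc (0:ℝ) T) := by
      have := intervalIntegral.continuousOn_primitive_interval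
        (a := (0:ℝ)) (b := T) (f := fun ξ => |ψ ξ|) (μ := volume)
        (by rwa [Set.uIcc_of_le hT.le])
      rwa [Set.uIcc_of_le hT.le] at this
    have h2 : ContinuousOn
        (fun s => Real.exp (lam * s) * Real.exp (-c * ∫ ξ in (0:ℝ)..s, |ψ ξ|))
        (Icc (0:ℝ) T) := by
      have hcexp : Continuous fun s : ℝ => Real.exp (lam * s) := by fun_prop
      exact hcexp.continuousOn.mul
        (Real.continuous_exp.comp_continuousOn (continuousOn_const.mul h1))
    have h3 : ContinuousOn
        (fun s => Real.exp (lam * s) * Real.exp (-c * ∫ ξ in (0:ℝ)..s, |ψ ξ|))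
        (uIcc (0:ℝ) t) := by
      rw [Set.uIcc_of_le ht.1]
      exact h2.mono (Icc_subset_Icc le_rfl ht.2)
    exact h3.intervalIntegrable
  have hI₁int := hcontE ψ₁ hint₁
  have hI₂int := hcontE ψ₂ hint₂
  set I₁ : ℝ := ∫ s in (0:ℝ)..t, Real.exp (lam * s) * E₁ s with hI₁def
  set I₂ : ℝ := ∫ s in (0:ℝ)..t, Real.exp (lam * s) * E₂ s with hI₂def
  -- bound on I₁
  have hI₁bd : |I₁| ≤ C * T := by
    have hb : ∀ s ∈ Set.uIoc (0:ℝ) t, ‖Real.exp (lam * s) * E₁ s‖ ≤ C := by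
      intro s hsι
      rw [Set.uIoc_of_le ht.1] at hsι
      have hmem : s ∈ Icc (0:ℝ) T := ⟨hsι.1.le, hsι.2.trans ht.2⟩
      rw [Real.norm_eq_abs, abs_mul, abs_of_pos (Real.exp_pos _), abs_of_pos (Real.exp_pos _)]
      calc Real.exp (lam * s) * E₁ s ≤ C * 1 :=
            mul_le_mul (hexpb s hmem) (hE_le1 s hmem).1 (Real.exp_pos _).le hC0
        _ = C := mul_one C
    calc |I₁| ≤ C * |t - 0| := intervalIntegral.norm_integral_le_of_norm_le_const hb
      _ ≤ C * T := by rw [sub_zero, abs_of_nonneg ht.1]; exact mul_le_mul_of_nonneg_left ht.2 hC0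
  -- bound on I₂ - I₁
  have hIdiff : |I₂ - I₁| ≤ C * (c * T * S) * T := by
    have heq : I₂ - I₁ = ∫ s in (0:ℝ)..t, (Real.exp (lam * s) * E₂ s -
        Real.exp (lam * s) * E₁ s) :=
      (intervalIntegral.integral_sub hI₂int hI₁int).symm
    rw [heq]
    have hb : ∀ s ∈ Set.uIoc (0:ℝ) t,
        ‖Real.exp (lam * s) * E₂ s - Real.exp (lam * s) * E₁ s‖ ≤ C * (c * T * S) := by
      intro s hsι
      rw [Set.uIoc_of_le ht.1] at hsι
      have hmem : s ∈ Icc (0:ℝ) T := ⟨hsι.1.le, hsι.2.trans ht.2⟩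
      have : Real.exp (lam * s) * E₂ s - Real.exp (lam * s) * E₁ s =
          Real.exp (lam * s) * (E₂ s - E₁ s) := by ring
      rw [Real.norm_eq_abs, this, abs_mul, abs_of_pos (Real.exp_pos _), abs_sub_comm]
      exact mul_le_mul (hexpb s hmem) (hEdiff s hmem) (abs_nonneg _)
        hC0
    calc abs (∫ s in (0:ℝ)..t, (Real.exp (lam * s) * E₂ s - Real.exp (lam * s) * E₁ s))
        ≤ C * (c * T * S) * |t - 0| := intervalIntegral.norm_integral_le_of_norm_le_const hb
      _ ≤ C * (c * T * S) * T := by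
          rw [sub_zero, abs_of_nonneg ht.1]
          exact mul_le_mul_of_nonneg_left ht.2 (by positivity)
  -- final algebra
  have hkey : E₁ t * I₂ - E₂ t * I₁ = E₁ t * (I₂ - I₁) + I₁ * (E₁ t - E₂ t) := by ring
  have hE₁t0 : 0 ≤ E₁ t := (Real.exp_pos _).le
  have hE₁t1 : E₁ t ≤ 1 := (hE_le1 t ht).1
  calc |E₁ t * I₂ - E₂ t * I₁|
      ≤ |E₁ t * (I₂ - I₁)| + |I₁ * (E₁ t - E₂ t)| := by rw [hkey]; exact abs_add_le _ _
    _ = |E₁ t| * |I₂ - I₁| + |I₁| * |E₁ t - E₂ t| := by rw [abs_mul, abs_mul]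
    _ ≤ 1 * (C * (c * T * S) * T) + (C * T) * (c * T * S) := by
        gcongr <;>
          first
          | (rw [abs_of_nonneg hE₁t0]; exact hE₁t1)
          | exact hIdiff
          | exact hI₁bd
          | exact hEdiff t ht
    _ = 2 * c * C * T ^ 2 * S := by ring
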